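/- If x is an aperiodic infinite word and there exists k > 0 such that span_x(n) ≤ k for infinitely many n > 0, then x is quasi-Sturmian: there exist integers d and n_0 such that p_x(n) = n + d for all n ≥ n_0. -/

import Mathlib

open scoped Classical

/-- `u` occurs in `w` starting at (0-based) position `i`. -/
def occursAt {α : Type*} (w u : List α) (i : ℕ) : Prop := (w.drop i).take u.length = u

/-- `u` is a factor of the finite word `w`. -/
def IsFactorOf {α : Type*} (w u : List α) : Prop := ∃ i, occursAt w u i

/-- `Γ` is a string attractor of the finite word `w` (positions are 0-based). -/
def IsAttractor {α : Type*} (w : List α) (Γ : Finset ℕ) : Prop :=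
  (∀ k ∈ Γ, k < w.length) ∧
  ∀ u : List α, u ≠ [] → IsFactorOf w u →
    ∃ i, occursAt w u i ∧ ∃ k ∈ Γ, i ≤ k ∧ k < i + u.length

/-- `γ*(w)`: minimum size of a string attractor of `w`. -/
noncomputable def gammaStar {α : Type*} (w : List α) : ℕ :=
  sInf {n | ∃ Γ : Finset ℕ, IsAttractor w Γ ∧ Γ.card = n}

/-- `span(w)`: minimum of (rightmost − leftmost position) over string attractors of `w`. -/
noncomputable def spanW {α : Type*} (w : List α) : ℕ :=
  sInf {d | ∃ Γ : Finset ℕ, IsAttractor w Γ ∧ sSup (Γ : Set ℕ) - sInf (Γ : Set ℕ) = d}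

/-- `lm(w)`: minimum rightmost position over string attractors of `w`. -/
noncomputable def lmW {α : Type*} (w : List α) : ℕ :=
  sInf {m | ∃ Γ : Finset ℕ, IsAttractor w Γ ∧ sSup (Γ : Set ℕ) = m}

/-- prefix of length `n` of the infinite word `x`. -/
def pref {α : Type*} (x : ℕ → α) (n : ℕ) : List α := (List.range n).map x

/-- the factor of length `m` of `x` starting at position `i`. -/
def factorAt {α : Type*} (x : ℕ → α) (i m : ℕ) : List α := (List.range m).map (fun t => x (i + t))

/-- `u` is a factor of the infinite word `x`. -/
def IsFactorInf {α : Type*} (x : ℕ → α) (u : List α) : Prop := ∃ i, u = factorAt x i u.length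

/-- factor complexity `p_x(n)`. -/
noncomputable def complexity {α : Type*} (x : ℕ → α) (n : ℕ) : ℕ :=
  {u : List α | u.length = n ∧ IsFactorInf x u}.ncard

/-- appearance function `A_x(n)`: least `m` such that the prefix of length `m`
contains all factors of `x` of length `n`. -/
noncomputable def appearance {α : Type*} (x : ℕ → α) (n : ℕ) : ℕ :=
  sInf {m | ∀ u : List α, u.length = n → IsFactorInf x u → IsFactorOf (pref x m) u}

/-- `x` is ultimately periodic. -/
def UltPeriodic {α : Type*} (x : ℕ → α) : Prop :=
  ∃ p N : ℕ, 0 < p ∧ ∀ i, N ≤ i → x (i + p) = x i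

/-- `x` is recurrent: every factor occurs infinitely often. -/
def Recurrent {α : Type*} (x : ℕ → α) : Prop :=
  ∀ u : List α, IsFactorInf x u → ∀ N : ℕ, ∃ i, N ≤ i ∧ u = factorAt x i u.length

/-- `u ^ k`: the `k`-th power of a finite word. -/
def listPow {α : Type*} (u : List α) : ℕ → List α
  | 0 => []
  | k + 1 => u ++ listPow u k

/-- `x` is ω-power free. -/
def OmegaPowerFree {α : Type*} (x : ℕ → α) : Prop :=
  ∀ u : List α, u ≠ [] → IsFactorInf x u → ∃ k : ℕ, ¬ IsFactorInf x (listPow u k)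

section Aux15

variable {α : Type*}

@[simp] lemma pref_length' (x : ℕ → α) (n : ℕ) : (pref x n).length = n := by simp [pref]

@[simp] lemma factorAt_length' (x : ℕ → α) (i m : ℕ) : (factorAt x i m).length = m := by
  simp [factorAt]

lemma drop_take_pref' (x : ℕ → α) {i m n : ℕ} (hmn : i + m ≤ n) :
    ((pref x n).drop i).take m = factorAt x i m := by
  apply List.ext_getElem
  · simp [pref, factorAt]; omega
  · intro t h1 h2
    simp [pref, factorAt]

lemma occursAt_pref_of' (x : ℕ → α) {i m n : ℕ} (hmn : i + m ≤ n) :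
    occursAt (pref x n) (factorAt x i m) i := by
  unfold occursAt
  rw [factorAt_length']
  exact drop_take_pref' x hmn

lemma occursAt_pref' {x : ℕ → α} {u : List α} {i n : ℕ} (hu : u ≠ [])
    (h : occursAt (pref x n) u i) :
    u = factorAt x i u.length ∧ i + u.length ≤ n := by
  have hlen : (((pref x n).drop i).take u.length).length = u.length := by rw [h]
  have h0 : u.length ≠ 0 := fun e => hu (List.length_eq_zero_iff.mp e)
  simp only [List.length_take, List.length_drop, pref_length'] at hlen
  have hle : i + u.length ≤ n := by omega
  exact ⟨(h.symm.trans (drop_take_pref' x hle)), hle⟩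

lemma factorAt_eq_iff' {x : ℕ → α} {i j m : ℕ} :
    factorAt x i m = factorAt x j m ↔ ∀ s, s < m → x (i + s) = x (j + s) := by
  constructor
  · intro h s hs
    have := congrArg (fun l => l[s]?) h
    simpa [factorAt, hs] using this
  · intro h
    apply List.ext_getElem (by simp)
    intro t h1 h2
    simp only [factorAt, List.getElem_map, List.getElem_range]
    exact h t (by simpa [factorAt] using h1)

lemma factorAt_take' (x : ℕ → α) (i m : ℕ) :
    (factorAt x i (m + 1)).take m = factorAt x i m := by
  apply List.ext_getElem
  · simp
  · intro t h1 h2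
    simp [factorAt]

lemma finite_factors' (x : ℕ → α) [Finite α] (n : ℕ) :
    {u : List α | u.length = n ∧ IsFactorInf x u}.Finite :=
  (List.finite_length_eq α n).subset (fun _ hu => hu.1)

lemma attractor_range' (w : List α) : IsAttractor w (Finset.range w.length) := by
  constructor
  · intro k hk; simpa using hk
  · rintro u hu ⟨i, hi⟩
    have h0 : u.length ≠ 0 := fun e => hu (List.length_eq_zero_iff.mp e)
    refine ⟨i, hi, i, ?_, le_refl i, by omega⟩
    simp only [Finset.mem_range]
    by_contra hbig
    push_neg at hbig
    have hd : w.drop i = [] := List.drop_eq_nil_of_le hbig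
    unfold occursAt at hi
    rw [hd] at hi
    simp at hi
    exact hu hi

lemma spanW_witness' (w : List α) :
    ∃ Γ : Finset ℕ, IsAttractor w Γ ∧ sSup (Γ : Set ℕ) - sInf (Γ : Set ℕ) = spanW w := by
  have hne : {d | ∃ Γ : Finset ℕ, IsAttractor w Γ ∧
      sSup (Γ : Set ℕ) - sInf (Γ : Set ℕ) = d}.Nonempty :=
    ⟨_, Finset.range w.length, attractor_range' w, rfl⟩
  exact Nat.sInf_mem hne

lemma complexity_le' (x : ℕ → α) [Finite α] {k : ℕ} (hk : 0 < k)
    (h : ∀ N : ℕ, ∃ n, N < n ∧ spanW (pref x n) ≤ k) (m : ℕ) :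
    complexity x m ≤ m + k := by
  classical
  rcases Nat.eq_zero_or_pos m with rfl | hm
  · have hsub : {u : List α | u.length = 0 ∧ IsFactorInf x u} ⊆ {([] : List α)} := by
      intro u hu
      simp only [Set.mem_singleton_iff]
      exact List.length_eq_zero_iff.mp hu.1
    calc complexity x 0 ≤ ({([] : List α)} : Set (List α)).ncard :=
          Set.ncard_le_ncard hsub (Set.finite_singleton _)
      _ = 1 := Set.ncard_singleton _
      _ ≤ 0 + k := by omega
  · set F := {u : List α | u.length = m ∧ IsFactorInf x u} with hFdef
    have hF : F.Finite := finite_factors' x m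
    let occ : List α → ℕ := fun u => if h : IsFactorInf x u then h.choose else 0
    have hocc : ∀ u : List α, IsFactorInf x u → u = factorAt x (occ u) u.length := by
      intro u hu
      simp only [occ, dif_pos hu]
      exact hu.choose_spec
    set N := hF.toFinset.sup (fun u => occ u + m) with hNdef
    obtain ⟨n, hnN, hspan⟩ := h N
    obtain ⟨Γ, hΓ, hΓspan⟩ := spanW_witness' (pref x n)
    set a := sInf (Γ : Set ℕ) with hadef
    set b := sSup (Γ : Set ℕ) with hbdef
    have hfac : ∀ u ∈ F, occursAt (pref x n) u (occ u) := by
      intro u hu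
      have h1 : occ u + m ≤ N := Finset.le_sup (f := fun u => occ u + m) (hF.mem_toFinset.mpr hu)
      have h2 : u = factorAt x (occ u) u.length := hocc u hu.2
      have h3 : u.length = m := hu.1
      have hle : occ u + m ≤ n := by omega
      nth_rewrite 1 [h2]
      rw [h3]
      exact occursAt_pref_of' x hle
    have key : ∀ u ∈ F, ∃ i, occursAt (pref x n) u i ∧ a + 1 ≤ i + m ∧ i ≤ b ∧ a ≤ b := by
      intro u hu
      have hune : u ≠ [] := by
        intro e
        have := hu.1
        rw [e] at this
        simp at this
        omega
      obtain ⟨i, hocc', kk, hkkΓ, hik, hik2⟩ := hΓ.2 u hune ⟨occ u, hfac u hu⟩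
      have hkk : kk ∈ (Γ : Set ℕ) := hkkΓ
      have ha : a ≤ kk := Nat.sInf_le hkk
      have hb : kk ≤ b := le_csSup (Γ.finite_toSet.bddAbove) hkk
      have h3 : u.length = m := hu.1
      rw [h3] at hik2
      exact ⟨i, hocc', by omega, by omega, by omega⟩
    let pos : List α → ℕ := fun u =>
      if h : ∃ i, occursAt (pref x n) u i ∧ a + 1 ≤ i + m ∧ i ≤ b ∧ a ≤ b then h.choose else 0
    have hpos : ∀ u ∈ F, occursAt (pref x n) u (pos u) ∧ a + 1 ≤ pos u + m ∧ pos u ≤ b ∧ a ≤ b := by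
      intro u hu
      have hex := key u hu
      simp only [pos, dif_pos hex]
      exact hex.choose_spec
    have hcard : hF.toFinset.card ≤ (Finset.Icc (a + 1 - m) b).card := by
      apply Finset.card_le_card_of_injOn pos
      · intro u hu
        obtain ⟨_, h1, h2, _⟩ := hpos u (hF.mem_toFinset.mp hu)
        simp only [Finset.mem_coe, Finset.mem_Icc]
        omega
      · intro u hu v hv he
        have hu' := hF.mem_toFinset.mp hu
        have hv' := hF.mem_toFinset.mp hv
        have h1 := (hpos u hu').1
        have h2 := (hpos v hv').1
        unfold occursAt at h1 h2
        rw [← h1, ← h2, he, hu'.1, hv'.1]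
    have hab : a ≤ b := by
      have hmem : factorAt x 0 m ∈ F := ⟨factorAt_length' x 0 m, ⟨0, by rw [factorAt_length']⟩⟩
      exact ((hpos _ hmem).2.2.2)
    have hba : b - a ≤ k := by rw [hΓspan]; exact hspan
    calc complexity x m = hF.toFinset.card := Set.ncard_eq_toFinset_card _ hF
      _ ≤ (Finset.Icc (a + 1 - m) b).card := hcard
      _ = b + 1 - (a + 1 - m) := Nat.card_Icc _ _
      _ ≤ m + k := by omega

lemma complexity_lt' (x : ℕ → α) [Finite α] (hap : ¬ UltPeriodic x) (n : ℕ) :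
    complexity x n < complexity x (n + 1) := by
  classical
  by_contra hle
  push_neg at hle
  apply hap
  set F := {u : List α | u.length = n ∧ IsFactorInf x u} with hFdef
  set G := {u : List α | u.length = n + 1 ∧ IsFactorInf x u} with hGdef
  have hGfin : G.Finite := finite_factors' x (n + 1)
  have hFmem : ∀ i, factorAt x i n ∈ F :=
    fun i => ⟨factorAt_length' x i n, ⟨i, by rw [factorAt_length']⟩⟩
  have hGmem : ∀ i, factorAt x i (n + 1) ∈ G :=
    fun i => ⟨factorAt_length' x i (n + 1), ⟨i, by rw [factorAt_length']⟩⟩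
  have hmaps : ∀ u ∈ G, u.take n ∈ F := by
    intro u hu
    obtain ⟨hlen, i, hi⟩ := hu
    rw [hlen] at hi
    rw [hi, factorAt_take']
    exact hFmem i
  have hsurj : ∀ v ∈ F, ∃ u hu, (fun (u : List α) (_ : u ∈ G) => u.take n) u hu = v := by
    intro v hv
    obtain ⟨hlen, i, hi⟩ := hv
    rw [hlen] at hi
    refine ⟨factorAt x i (n + 1), hGmem i, ?_⟩
    show (factorAt x i (n + 1)).take n = v
    rw [factorAt_take', ← hi]
  have hinj := Set.inj_on_of_surj_on_of_ncard_le (s := G) (t := F)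
    (fun u _ => u.take n) (fun u hu => hmaps u hu) hsurj hle
  -- determinism of extensions
  have det : ∀ i j, factorAt x i n = factorAt x j n → x (i + n) = x (j + n) := by
    intro i j hij
    have heq : factorAt x i (n + 1) = factorAt x j (n + 1) := by
      refine hinj (hGmem i) (hGmem j) ?_ hGfin
      simp only [factorAt_take']
      exact hij
    have := factorAt_eq_iff'.mp heq n (by omega)
    exact this
  -- pigeonhole
  have hFfin : F.Finite := finite_factors' x n
  obtain ⟨i, _, j, _, hne, hij⟩ :
      ∃ i ∈ Finset.range (hFfin.toFinset.card + 1), ∃ j ∈ Finset.range (hFfin.toFinset.card + 1),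
        i ≠ j ∧ factorAt x i n = factorAt x j n := by
    apply Finset.exists_ne_map_eq_of_card_lt_of_maps_to (t := hFfin.toFinset)
    · simp
    · intro i _
      exact hFfin.mem_toFinset.mpr (hFmem i)
  -- wlog i < j
  have main : ∀ i j : ℕ, factorAt x i n = factorAt x j n →
      ∀ t s, s ≤ n → x (i + t + s) = x (j + t + s) := by
    intro i j hij t
    induction t with
    | zero =>
      intro s hs
      rcases eq_or_lt_of_le hs with rfl | hs'
      · have := det i j hij
        simpa using this
      · have := factorAt_eq_iff'.mp hij s hs'
        simpa using this
    | succ t ih =>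
      intro s hs
      have hw : factorAt x (i + t + 1) n = factorAt x (j + t + 1) n := by
        apply factorAt_eq_iff'.mpr
        intro s' hs'
        rw [show i + t + 1 + s' = i + t + (s' + 1) from by omega,
            show j + t + 1 + s' = j + t + (s' + 1) from by omega]
        exact ih (s' + 1) (by omega)
      rcases eq_or_lt_of_le hs with rfl | hs'
      · have := det (i + t + 1) (j + t + 1) hw
        rw [show i + (t + 1) + s = i + t + 1 + s from by omega,
            show j + (t + 1) + s = j + t + 1 + s from by omega]
        exact this
      · rw [show i + (t + 1) + s = i + t + (s + 1) from by omega,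
            show j + (t + 1) + s = j + t + (s + 1) from by omega]
        exact ih (s + 1) (by omega)
  rcases hne.lt_or_gt with hlt | hlt
  · refine ⟨j - i, i, by omega, ?_⟩
    intro s hs
    have h0 := main i j hij (s - i) 0 (Nat.zero_le n)
    rw [show i + (s - i) + 0 = s from by omega, show j + (s - i) + 0 = s + (j - i) from by omega]
      at h0
    exact h0.symm
  · refine ⟨i - j, j, by omega, ?_⟩
    intro s hs
    have h0 := main j i hij.symm (s - j) 0 (Nat.zero_le n)
    rw [show j + (s - j) + 0 = s from by omega, show i + (s - j) + 0 = s + (i - j) from by omega]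
      at h0
    exact h0.symm

end Aux15

/-- aperiodic + span bounded infinitely often implies quasi-Sturmian. -/
theorem stmt15 {α : Type*} [Fintype α] (x : ℕ → α) (hap : ¬ UltPeriodic x)
    (k : ℕ) (hk : 0 < k) (h : ∀ N : ℕ, ∃ n, N < n ∧ spanW (pref x n) ≤ k) :
    ∃ d n₀ : ℕ, ∀ n, n₀ ≤ n → complexity x n = n + d := by
  have hmono : ∀ n, complexity x n + 1 ≤ complexity x (n + 1) :=
    fun n => complexity_lt' x hap n
  have hub : ∀ n, complexity x n ≤ n + k := complexity_le' x hk h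
  have hlow : ∀ n, n ≤ complexity x n := by
    intro n
    induction n with
    | zero => omega
    | succ n ih => have := hmono n; omega
  set d : ℕ → ℕ := fun n => complexity x n - n with hddef
  have hdmono : Monotone d := by
    apply monotone_nat_of_le_succ
    intro n
    have h1 := hmono n
    have h2 := hlow n
    simp only [hddef]
    omega
  have hbdd : BddAbove (Set.range d) := by
    refine ⟨k, ?_⟩
    rintro _ ⟨n, rfl⟩
    have := hub n
    have := hlow n
    simp only [hddef]
    omega
  obtain ⟨n₀, hn₀⟩ := Nat.sSup_mem (Set.range_nonempty d) hbdd
  refine ⟨sSup (Set.range d), n₀, fun n hn => ?_⟩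
  have h1 : d n ≤ sSup (Set.range d) := le_csSup hbdd ⟨n, rfl⟩
  have h2 : sSup (Set.range d) ≤ d n := by
    rw [← hn₀]
    exact hdmono hn
  have h3 := hlow n
  have h4 : complexity x n - n = sSup (Set.range d) := le_antisymm h1 h2
  omega
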